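/- arXiv:0805.4344 — 2 statements merged into one kernel-verified Lean document; each statement's English description precedes it below -/
import Mathlib

section
/- Suppose d ≥ 2 and the averaging operator S along the moment curve maps L^{(d+1)/2}(ℝ^d) boundedly into the Lorentz space L^{p,r}(ℝ^d) with p = d(d+1)/(2(d-1)). Then necessarily r ≥ (d+1)/2. -/
open MeasureTheory Set
open scoped ENNReal

/-- The Lorentz `L^{p,r}` quasinorm, `‖f‖_{p,r} = (∫₀^∞ λ^{r-1} μ(|f|>λ)^{r/p} dλ)^{1/r}`
(up to an inessential constant factor). -/
noncomputable def lorentzNorm {α : Type*} [MeasurableSpace α] (μ : Measure α)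
    (f : α → ℝ) (p r : ℝ) : ENNReal :=
  (∫⁻ l in Set.Ioi (0 : ℝ),
      ENNReal.ofReal (l ^ (r - 1)) * (μ {x | l < |f x|}) ^ (r / p)) ^ (1 / r)

/-- The averaging operator along the moment curve, `S f(x) = ∫_{-1}^1 f(x - γ(t)) dt`. -/
noncomputable def momentAvg (d : ℕ) (f : (Fin d → ℝ) → ℝ) : (Fin d → ℝ) → ℝ :=
  fun x => ∫ t in Set.Icc (-1 : ℝ) 1, f (x - fun i : Fin d => t ^ (i.1 + 1))

namespace Stmt14

noncomputable section

def sigma (d : ℕ) : ℕ := ∑ i ∈ Finset.range d, (i + 1)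

lemma two_sigma (d : ℕ) : 2 * sigma d = d * (d + 1) := by
  induction d with
  | zero => simp [sigma]
  | succ n ih =>
    simp only [sigma, Finset.sum_range_succ] at *
    rw [Nat.mul_add, ih]; ring

lemma sigma_real (d : ℕ) : ((sigma d : ℕ) : ℝ) = d * (d + 1) / 2 := by
  have := two_sigma d
  have : (2 : ℝ) * sigma d = d * (d + 1) := by exact_mod_cast this
  linarith

/-- the corner of the k-th translated box -/
def corner (d k : ℕ) : Fin d → ℝ := fun i => if (i : ℕ) = 0 then 3 * k else 0

/-- dyadic scale -/
def del (k : ℕ) : ℝ := (2 : ℝ) ^ (-(k : ℝ))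

/-- height of the k-th piece -/
def ht (d k : ℕ) : ℝ := (2 : ℝ) ^ ((k : ℝ) * d)

/-- level produced by the k-th piece -/
def lam (d k : ℕ) : ℝ := (2 : ℝ) ^ ((k : ℝ) * ((d : ℝ) - 1))

lemma del_pos (k : ℕ) : 0 < del k := Real.rpow_pos_of_pos (by norm_num) _
lemma del_le_one (k : ℕ) : del k ≤ 1 :=
  Real.rpow_le_one_of_one_le_of_nonpos (by norm_num) (neg_nonpos.mpr (Nat.cast_nonneg k))
lemma ht_pos (d k : ℕ) : 0 < ht d k := Real.rpow_pos_of_pos (by norm_num) _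
lemma lam_pos (d k : ℕ) : 0 < lam d k := Real.rpow_pos_of_pos (by norm_num) _

lemma ht_mul_del (d k : ℕ) : ht d k * del k = lam d k := by
  rw [ht, del, lam, ← Real.rpow_add (by norm_num)]
  ring_nf

/-- The support box of the k-th piece. -/
def bigS (d k : ℕ) : Set (Fin d → ℝ) :=
  Set.univ.pi fun i => Icc (corner d k i) (corner d k i + 2 * del k ^ ((i : ℕ) + 1))

/-- The box where the average is large. -/
def bigT (d k : ℕ) : Set (Fin d → ℝ) :=
  Set.univ.pi fun i =>
    Icc (corner d k i + del k ^ ((i : ℕ) + 1)) (corner d k i + 2 * del k ^ ((i : ℕ) + 1))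

lemma measurableSet_bigS (d k : ℕ) : MeasurableSet (bigS d k) :=
  MeasurableSet.univ_pi fun _ => measurableSet_Icc

lemma measurableSet_bigT (d k : ℕ) : MeasurableSet (bigT d k) :=
  MeasurableSet.univ_pi fun _ => measurableSet_Icc

lemma volume_bigS (d k : ℕ) :
    volume (bigS d k) = ENNReal.ofReal ((2 : ℝ) ^ d * del k ^ sigma d) := by
  rw [bigS, volume_pi_pi]
  have h : ∀ i : Fin d, volume (Icc (corner d k i) (corner d k i + 2 * del k ^ ((i : ℕ) + 1)))
      = ENNReal.ofReal (2 * del k ^ ((i : ℕ) + 1)) := by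
    intro i; rw [Real.volume_Icc]; ring_nf
  simp_rw [h]
  rw [← ENNReal.ofReal_prod_of_nonneg (fun i _ => by have := del_pos k; positivity)]
  congr 1
  rw [Finset.prod_mul_distrib, Finset.prod_const, Finset.prod_pow_eq_pow_sum]
  simp [sigma, Fin.sum_univ_eq_sum_range (fun i => i + 1) d]

lemma volume_bigT (d k : ℕ) :
    volume (bigT d k) = ENNReal.ofReal (del k ^ sigma d) := by
  rw [bigT, volume_pi_pi]
  have h : ∀ i : Fin d, volume (Icc (corner d k i + del k ^ ((i : ℕ) + 1))
      (corner d k i + 2 * del k ^ ((i : ℕ) + 1)))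
      = ENNReal.ofReal (del k ^ ((i : ℕ) + 1)) := by
    intro i; rw [Real.volume_Icc]; ring_nf
  simp_rw [h]
  rw [← ENNReal.ofReal_prod_of_nonneg (fun i _ => by have := del_pos k; positivity)]
  congr 1
  rw [Finset.prod_pow_eq_pow_sum]
  simp [sigma, Fin.sum_univ_eq_sum_range (fun i => i + 1) d]


lemma sub_gamma_mem (d k : ℕ) (x : Fin d → ℝ) (hx : x ∈ bigT d k) {t : ℝ}
    (ht0 : 0 ≤ t) (htd : t ≤ del k) :
    (x - fun i : Fin d => t ^ ((i : ℕ) + 1)) ∈ bigS d k := by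
  rw [bigS, Set.mem_pi]
  intro i _
  rw [bigT, Set.mem_pi] at hx
  have hxi := hx i (Set.mem_univ i)
  rw [Set.mem_Icc] at hxi
  have htpow : t ^ ((i : ℕ) + 1) ≤ del k ^ ((i : ℕ) + 1) :=
    pow_le_pow_left₀ ht0 htd _
  have htpow0 : 0 ≤ t ^ ((i : ℕ) + 1) := pow_nonneg ht0 _
  simp only [Pi.sub_apply, Set.mem_Icc]
  constructor
  · linarith [hxi.1]
  · linarith [hxi.2]

lemma eq_of_mem_bigS {d k k' : ℕ} (hd : 0 < d) {x : Fin d → ℝ}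
    (h : x ∈ bigS d k) (h' : x ∈ bigS d k') : k = k' := by
  set i0 : Fin d := ⟨0, hd⟩
  have key : ∀ m : ℕ, x ∈ bigS d m → (3 * m : ℝ) ≤ x i0 ∧ x i0 ≤ 3 * m + 2 := by
    intro m hm
    rw [bigS, Set.mem_pi] at hm
    have := hm i0 (Set.mem_univ i0)
    rw [Set.mem_Icc] at this
    have hc : corner d m i0 = 3 * m := by simp [corner, i0]
    have hdel : 2 * del m ^ ((i0 : ℕ) + 1) ≤ 2 := by
      have h1 : del m ^ ((i0 : ℕ) + 1) ≤ 1 :=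
        pow_le_one₀ (le_of_lt (del_pos m)) (del_le_one m)
      linarith
    rw [hc] at this
    exact ⟨this.1, by linarith [this.2]⟩
  have h1 := key k h
  have h2 := key k' h'
  have hk : (3 * k : ℝ) ≤ 3 * k' + 2 := by linarith [h1.1, h2.2]
  have hk' : (3 * k' : ℝ) ≤ 3 * k + 2 := by linarith [h2.1, h1.2]
  have hkn : 3 * k ≤ 3 * k' + 2 := by exact_mod_cast hk
  have hkn' : 3 * k' ≤ 3 * k + 2 := by exact_mod_cast hk'
  omega

/-- the test function: a sum of weighted indicators of boxes -/
def ff (d L : ℕ) : (Fin d → ℝ) → ℝ :=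
  fun x => ∑ k ∈ Finset.range L, (bigS d k).indicator (fun _ => ht d k) x

lemma measurable_ff (d L : ℕ) : Measurable (ff d L) := by
  apply Finset.measurable_sum
  intro k _
  exact Measurable.indicator measurable_const (measurableSet_bigS d k)

lemma piece_nonneg (d k : ℕ) (x : Fin d → ℝ) :
    0 ≤ (bigS d k).indicator (fun _ => ht d k) x :=
  Set.indicator_nonneg (fun _ _ => le_of_lt (ht_pos d k)) x

lemma ff_nonneg (d L : ℕ) (x : Fin d → ℝ) : 0 ≤ ff d L x :=
  Finset.sum_nonneg fun k _ => piece_nonneg d k x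

lemma ff_le (d L : ℕ) (x : Fin d → ℝ) : ff d L x ≤ ∑ k ∈ Finset.range L, ht d k := by
  apply Finset.sum_le_sum
  intro k _
  exact Set.indicator_le' (fun _ _ => le_rfl) (fun _ _ => le_of_lt (ht_pos d k)) x

lemma piece_le_ff {d L k : ℕ} (hk : k ∈ Finset.range L) (x : Fin d → ℝ) :
    (bigS d k).indicator (fun _ => ht d k) x ≤ ff d L x :=
  Finset.single_le_sum (fun j _ => piece_nonneg d j x) hk


lemma avg_ge (d L k : ℕ) (hkL : k < L) (x : Fin d → ℝ) (hx : x ∈ bigT d k) :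
    lam d k ≤ (∫ t in Set.Icc (-1 : ℝ) 1, ff d L (x - fun i : Fin d => t ^ ((i : ℕ) + 1))) := by
  set g : ℝ → ℝ := fun t => ff d L (x - fun i : Fin d => t ^ ((i : ℕ) + 1)) with hg
  have hgm : Measurable g := by
    apply (measurable_ff d L).comp
    apply Measurable.sub measurable_const
    exact measurable_pi_lambda _ fun i => (measurable_id.pow_const _)
  have hgnn : ∀ t, 0 ≤ g t := fun t => ff_nonneg d L _
  have hgbd : ∀ t, |g t| ≤ ∑ j ∈ Finset.range L, ht d j := by
    intro t
    rw [abs_of_nonneg (hgnn t)]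
    exact ff_le d L _
  have hInt : IntegrableOn g (Set.Icc (-1 : ℝ) 1) volume := by
    apply Measure.integrableOn_of_bounded (by simp : volume (Set.Icc (-1:ℝ) 1) ≠ ⊤)
      hgm.aestronglyMeasurable
    exact Filter.Eventually.of_forall (fun t => hgbd t)
  have hsub : Set.Icc (0 : ℝ) (del k) ⊆ Set.Icc (-1 : ℝ) 1 := by
    intro t htmem
    rw [Set.mem_Icc] at *
    exact ⟨by linarith [htmem.1], le_trans htmem.2 (del_le_one k)⟩
  have step1 : lam d k ≤ ∫ t in Set.Icc (0 : ℝ) (del k), g t := by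
    have hvol : (volume (Set.Icc (0 : ℝ) (del k))).toReal = del k := by
      rw [Real.volume_Icc]; simp [ENNReal.toReal_ofReal (le_of_lt (del_pos k))]
    have hge : ∀ t ∈ Set.Icc (0 : ℝ) (del k), ht d k ≤ g t := by
      intro t htmem
      rw [Set.mem_Icc] at htmem
      have hmem := sub_gamma_mem d k x hx htmem.1 htmem.2
      have : (bigS d k).indicator (fun _ => ht d k)
          (x - fun i : Fin d => t ^ ((i : ℕ) + 1)) = ht d k := Set.indicator_of_mem hmem _
      rw [hg]
      calc ht d k = _ := this.symm
        _ ≤ _ := piece_le_ff (Finset.mem_range.mpr hkL) _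
    have := setIntegral_ge_of_const_le (measurableSet_Icc) (by simp)
      hge (hInt.mono_set hsub)
    rw [measureReal_def, hvol, smul_eq_mul, mul_comm] at this
    rw [← ht_mul_del d k]
    exact this
  have step2 : (∫ t in Set.Icc (0 : ℝ) (del k), g t) ≤ ∫ t in Set.Icc (-1 : ℝ) 1, g t := by
    apply setIntegral_mono_set hInt
    · exact Filter.Eventually.of_forall (fun t => hgnn t)
    · exact Filter.Eventually.of_forall hsub
  linarith


def pp (d : ℕ) : ℝ := (d : ℝ) * ((d : ℝ) + 1) / (2 * ((d : ℝ) - 1))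

def qq (d : ℕ) : ℝ := ((d : ℝ) + 1) / 2

lemma dge (d : ℕ) (hd : 2 ≤ d) : (2 : ℝ) ≤ (d : ℝ) := by exact_mod_cast hd

lemma pp_pos (d : ℕ) (hd : 2 ≤ d) : 0 < pp d := by
  have := dge d hd
  apply div_pos <;> nlinarith

lemma qq_pos (d : ℕ) (hd : 2 ≤ d) : 0 < qq d := by
  have := dge d hd
  rw [qq]; nlinarith

lemma sigma_eq_pd (d : ℕ) (hd : 2 ≤ d) : ((sigma d : ℕ) : ℝ) = ((d : ℝ) - 1) * pp d := by
  have h2 := dge d hd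
  have h0 : ((d : ℝ) - 1) ≠ 0 := by nlinarith
  rw [sigma_real, pp]
  field_simp

lemma sigma_eq_dq (d : ℕ) : ((sigma d : ℕ) : ℝ) = (d : ℝ) * qq d := by
  rw [sigma_real, qq]; ring

lemma del_pow_sigma (d k : ℕ) :
    del k ^ sigma d = (2 : ℝ) ^ (-(k : ℝ) * (sigma d : ℝ)) := by
  rw [del, ← Real.rpow_natCast ((2 : ℝ) ^ (-(k : ℝ))) (sigma d),
    ← Real.rpow_mul (by norm_num)]

lemma key_cancel (d k : ℕ) (hd : 2 ≤ d) (r : ℝ) :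
    lam d k * lam d k ^ (r - 1) * ((del k ^ sigma d) ^ (r / pp d)) = 1 := by
  have hp0 : pp d ≠ 0 := ne_of_gt (pp_pos d hd)
  rw [del_pow_sigma, lam, ← Real.rpow_mul (by norm_num : (0:ℝ) ≤ 2),
    ← Real.rpow_mul (by norm_num : (0:ℝ) ≤ 2),
    ← Real.rpow_add (by norm_num : (0:ℝ) < 2),
    ← Real.rpow_add (by norm_num : (0:ℝ) < 2)]
  rw [show (k : ℝ) * ((d : ℝ) - 1) + (k : ℝ) * ((d : ℝ) - 1) * (r - 1) +
      -(k : ℝ) * (sigma d : ℝ) * (r / pp d) = 0 from ?_, Real.rpow_zero]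
  rw [sigma_eq_pd d hd]
  field_simp
  ring

lemma key_cost (d k : ℕ) (hd : 2 ≤ d) :
    ht d k ^ qq d * ((2 : ℝ) ^ d * del k ^ sigma d) = (2 : ℝ) ^ d := by
  have h1 : (2 : ℝ) ^ d = (2 : ℝ) ^ ((d : ℕ) : ℝ) := by
    rw [Real.rpow_natCast]
  rw [del_pow_sigma, ht, ← Real.rpow_mul (by norm_num : (0:ℝ) ≤ 2), h1,
    ← Real.rpow_add (by norm_num : (0:ℝ) < 2),
    ← Real.rpow_add (by norm_num : (0:ℝ) < 2)]
  congr 1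
  rw [sigma_eq_dq d]
  ring

lemma lam_ratio (d : ℕ) (hd : 2 ≤ d) {j k : ℕ} (hjk : j < k) :
    2 * lam d j ≤ lam d k := by
  have h2 : (2 : ℝ) * lam d j = (2 : ℝ) ^ (1 + (j : ℝ) * ((d : ℝ) - 1)) := by
    rw [lam, Real.rpow_add (by norm_num : (0:ℝ) < 2), Real.rpow_one]
  rw [h2, lam]
  apply Real.rpow_le_rpow_of_exponent_le (by norm_num)
  have hjk' : (j : ℝ) + 1 ≤ (k : ℝ) := by exact_mod_cast hjk
  have hd' := dge d hd
  nlinarith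


/-- the λ-interval attached to the k-th piece -/
def Ival (d k : ℕ) : Set ℝ := Set.Ioc (lam d k / 2) (3 / 4 * lam d k)

lemma Ival_subset (d k : ℕ) : Ival d k ⊆ Set.Ioi (0 : ℝ) := by
  intro l hl
  rw [Ival, Set.mem_Ioc] at hl
  have := lam_pos d k
  exact Set.mem_Ioi.mpr (by linarith [hl.1])

lemma Ival_disjoint (d : ℕ) (hd : 2 ≤ d) {j k : ℕ} (hjk : j < k) :
    Disjoint (Ival d j) (Ival d k) := by
  rw [Ival, Ival, Set.Ioc_disjoint_Ioc]
  have h1 := lam_ratio d hd hjk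
  have h2 := lam_pos d j
  have h3 := lam_pos d k
  apply le_max_of_le_right
  apply min_le_of_left_le
  linarith

lemma lorentz_integral_lower (d L : ℕ) (hd : 2 ≤ d) (r : ℝ) (hr : 0 < r) :
    ENNReal.ofReal ((L : ℝ) * ((2 : ℝ) ^ (-r) / 4)) ≤
      ∫⁻ l in Set.Ioi (0 : ℝ), ENNReal.ofReal (l ^ (r - 1)) *
        (volume {x : Fin d → ℝ | l < |momentAvg d (ff d L) x|}) ^ (r / pp d) := by
  set G : ℝ → ℝ≥0∞ := fun l => ENNReal.ofReal (l ^ (r - 1)) *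
    (volume {x : Fin d → ℝ | l < |momentAvg d (ff d L) x|}) ^ (r / pp d) with hG
  have hsub : (⋃ k ∈ Finset.range L, Ival d k) ⊆ Set.Ioi (0 : ℝ) := by
    intro l hl
    rw [Set.mem_iUnion₂] at hl
    obtain ⟨k, _, hk⟩ := hl
    exact Ival_subset d k hk
  have hdisj : Set.PairwiseDisjoint (↑(Finset.range L) : Set ℕ) (Ival d) := by
    intro j _ k _ hjk
    rcases lt_or_gt_of_ne hjk with h | h
    · exact Ival_disjoint d hd h
    · exact (Ival_disjoint d hd h).symm
  calc ENNReal.ofReal ((L : ℝ) * ((2 : ℝ) ^ (-r) / 4))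
      = ∑ k ∈ Finset.range L, ENNReal.ofReal ((2 : ℝ) ^ (-r) / 4) := by
        rw [Finset.sum_const, Finset.card_range, nsmul_eq_mul,
          ENNReal.ofReal_mul (by positivity), ENNReal.ofReal_natCast]
    _ ≤ ∑ k ∈ Finset.range L, ∫⁻ l in Ival d k, G l := by
        apply Finset.sum_le_sum
        intro k hk
        rw [Finset.mem_range] at hk
        -- pointwise lower bound for G on Ival d k
        have hlam := lam_pos d k
        have hdel := del_pos k
        have hpow : (0:ℝ) < del k ^ sigma d := pow_pos hdel _
        have hGlb : ∀ l ∈ Ival d k,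
            ENNReal.ofReal ((2 : ℝ) ^ (-r) * lam d k ^ (r - 1)) *
              (ENNReal.ofReal (del k ^ sigma d)) ^ (r / pp d) ≤ G l := by
          intro l hl
          rw [Ival, Set.mem_Ioc] at hl
          have hl0 : 0 < l := by linarith [hl.1]
          have hllam : l ≤ lam d k := by linarith [hl.2]
          apply mul_le_mul'
          · -- ofReal monotone: 2^{-r} lam^{r-1} ≤ l^{r-1}
            apply ENNReal.ofReal_le_ofReal
            have e1 : (2 : ℝ) ^ (-r) * lam d k ^ (r - 1) = (lam d k / 2) ^ r / lam d k := by
              rw [Real.div_rpow (le_of_lt hlam) (by norm_num), Real.rpow_sub hlam,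
                Real.rpow_one, Real.rpow_neg (by norm_num)]
              ring
            have e2 : l ^ (r - 1) = l ^ r / l := by
              rw [Real.rpow_sub hl0, Real.rpow_one]
            rw [e1, e2]
            apply div_le_div₀ (Real.rpow_nonneg (le_of_lt hl0) r) _ hl0 hllam
            exact Real.rpow_le_rpow (by positivity) (le_of_lt hl.1) (le_of_lt hr)
          · -- measure monotone
            apply ENNReal.rpow_le_rpow _ (div_nonneg (le_of_lt hr) (le_of_lt (pp_pos d hd)))
            rw [← volume_bigT d k]
            apply measure_mono
            intro x hx
            have h1 := avg_ge d L k hk x hx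
            have h2 : l < lam d k := by linarith [hl.2]
            have : lam d k ≤ |momentAvg d (ff d L) x| := by
              rw [momentAvg]
              exact le_trans h1 (le_abs_self _)
            exact Set.mem_setOf_eq ▸ lt_of_lt_of_le h2 this
        calc ENNReal.ofReal ((2 : ℝ) ^ (-r) / 4)
            = (ENNReal.ofReal ((2 : ℝ) ^ (-r) * lam d k ^ (r - 1)) *
                (ENNReal.ofReal (del k ^ sigma d)) ^ (r / pp d)) *
                volume (Ival d k) := by
              rw [Ival, Real.volume_Ioc, ENNReal.ofReal_rpow_of_pos hpow,
                ← ENNReal.ofReal_mul (by positivity),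
                ← ENNReal.ofReal_mul (by positivity)]
              congr 1
              have hkc := key_cancel d k hd r
              have : (2:ℝ) ^ (-r) * lam d k ^ (r - 1) * (del k ^ sigma d) ^ (r / pp d) *
                  (3 / 4 * lam d k - lam d k / 2) =
                  (2:ℝ) ^ (-r) / 4 *
                    (lam d k * lam d k ^ (r - 1) * (del k ^ sigma d) ^ (r / pp d)) := by
                ring
              rw [this, hkc, mul_one]
          _ ≤ ∫⁻ l in Ival d k, G l := by
              rw [← setLIntegral_const (Ival d k) _]
              exact setLIntegral_mono' measurableSet_Ioc hGlb
    _ = ∫⁻ l in ⋃ k ∈ Finset.range L, Ival d k, G l := by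
        rw [lintegral_biUnion_finset hdisj (fun k _ => measurableSet_Ioc) G]
    _ ≤ ∫⁻ l in Set.Ioi (0 : ℝ), G l := lintegral_mono_set hsub


lemma pointwise_pow_le (d L : ℕ) (hd : 2 ≤ d) (x : Fin d → ℝ) :
    ((‖ff d L x‖₊ : ℝ≥0∞)) ^ qq d ≤
      ∑ k ∈ Finset.range L,
        (bigS d k).indicator (fun _ => ENNReal.ofReal (ht d k) ^ qq d) x := by
  have hdpos : 0 < d := by omega
  by_cases hex : ∃ j ∈ Finset.range L, x ∈ bigS d j
  · obtain ⟨j, hj, hxj⟩ := hex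
    have hval : ff d L x = ht d j := by
      rw [ff, Finset.sum_eq_single_of_mem j hj]
      · exact Set.indicator_of_mem hxj _
      · intro b _ hbj
        apply Set.indicator_of_notMem
        intro hxb
        exact hbj (eq_of_mem_bigS hdpos hxb hxj)
    rw [hval, ← enorm_eq_nnnorm, Real.enorm_eq_ofReal (le_of_lt (ht_pos d j))]
    have : (bigS d j).indicator (fun _ => ENNReal.ofReal (ht d j) ^ qq d) x
        = ENNReal.ofReal (ht d j) ^ qq d := Set.indicator_of_mem hxj _
    rw [← this]
    exact Finset.single_le_sum (f := fun k =>
      (bigS d k).indicator (fun _ => ENNReal.ofReal (ht d k) ^ qq d) x)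
      (fun k _ => zero_le) hj
  · push_neg at hex
    have hval : ff d L x = 0 := by
      rw [ff]
      apply Finset.sum_eq_zero
      intro b hb
      exact Set.indicator_of_notMem (hex b hb) _
    rw [hval]
    simp only [nnnorm_zero, ENNReal.coe_zero]
    rw [ENNReal.zero_rpow_of_pos (qq_pos d hd)]
    exact zero_le

lemma eLp_upper (d L : ℕ) (hd : 2 ≤ d) :
    eLpNorm (ff d L) (ENNReal.ofReal (qq d)) volume ≤
      (ENNReal.ofReal ((L : ℝ) * (2 : ℝ) ^ d)) ^ (1 / qq d) := by
  have hq := qq_pos d hd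
  have hq0 : ENNReal.ofReal (qq d) ≠ 0 := by
    simp [ENNReal.ofReal_eq_zero, not_le, hq]
  have hqt : ENNReal.ofReal (qq d) ≠ ⊤ := ENNReal.ofReal_ne_top
  rw [eLpNorm_eq_lintegral_rpow_enorm_toReal hq0 hqt]
  rw [ENNReal.toReal_ofReal (le_of_lt hq)]
  apply ENNReal.rpow_le_rpow _ (by positivity)
  calc ∫⁻ x, ((‖ff d L x‖₊ : ℝ≥0∞)) ^ qq d
      ≤ ∫⁻ x, ∑ k ∈ Finset.range L,
          (bigS d k).indicator (fun _ => ENNReal.ofReal (ht d k) ^ qq d) x :=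
        lintegral_mono (fun x => pointwise_pow_le d L hd x)
    _ = ∑ k ∈ Finset.range L, ∫⁻ x,
          (bigS d k).indicator (fun _ => ENNReal.ofReal (ht d k) ^ qq d) x := by
        apply lintegral_finset_sum
        intro k _
        exact Measurable.indicator measurable_const (measurableSet_bigS d k)
    _ = ∑ k ∈ Finset.range L, ENNReal.ofReal ((2 : ℝ) ^ d) := by
        apply Finset.sum_congr rfl
        intro k _
        rw [lintegral_indicator (measurableSet_bigS d k)]
        simp only [lintegral_const, Measure.restrict_apply MeasurableSet.univ,
          Set.univ_inter]
        rw [volume_bigS d k, ENNReal.ofReal_rpow_of_pos (ht_pos d k),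
          ← ENNReal.ofReal_mul (Real.rpow_nonneg (le_of_lt (ht_pos d k)) _)]
        congr 1
        exact key_cost d k hd
    _ = ENNReal.ofReal ((L : ℝ) * (2 : ℝ) ^ d) := by
        rw [Finset.sum_const, Finset.card_range, nsmul_eq_mul,
          ENNReal.ofReal_mul (by positivity), ENNReal.ofReal_natCast]


end

end Stmt14

/-- If the averaging operator along the moment curve maps `L^{(d+1)/2}(ℝ^d)` into
the Lorentz space `L^{p,r}(ℝ^d)` with `p = d(d+1)/(2(d-1))`, then `r ≥ (d+1)/2`. -/
theorem stmt_14 (d : ℕ) (hd : 2 ≤ d) (r : ℝ) (hr : 0 < r) (C : ℝ) (hC : 0 < C)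
    (hbound : ∀ f : (Fin d → ℝ) → ℝ, Measurable f →
      lorentzNorm volume (momentAvg d f) ((d : ℝ) * (d + 1) / (2 * (d - 1))) r ≤
        ENNReal.ofReal C * eLpNorm f (ENNReal.ofReal (((d : ℝ) + 1) / 2)) volume) :
    ((d : ℝ) + 1) / 2 ≤ r := by

  by_contra hcon
  push_neg at hcon
  have hq : 0 < Stmt14.qq d := Stmt14.qq_pos d hd
  have hq' : r < Stmt14.qq d := hcon
  have hc1p : (0:ℝ) < (2:ℝ) ^ (-r) / 4 := by positivity
  have hb1p : (0:ℝ) < (2:ℝ) ^ d := by positivity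
  have hc1r : (0:ℝ) < ((2:ℝ) ^ (-r) / 4) ^ (1/r) := Real.rpow_pos_of_pos hc1p _
  have hb1q : (0:ℝ) < ((2:ℝ) ^ d : ℝ) ^ (1/Stmt14.qq d) := Real.rpow_pos_of_pos hb1p _
  have master : ∀ L : ℕ, 1 ≤ L →
      ((L:ℝ) * ((2:ℝ) ^ (-r) / 4)) ^ (1/r) ≤
        C * ((L:ℝ) * (2:ℝ) ^ d) ^ (1 / Stmt14.qq d) := by
    intro L hL
    have hLpos : (0:ℝ) < L := by exact_mod_cast hL
    have hb := hbound (Stmt14.ff d L) (Stmt14.measurable_ff d L)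
    have hlc : (0:ℝ) < (L:ℝ) * ((2:ℝ) ^ (-r) / 4) := mul_pos hLpos hc1p
    have hlb : (0:ℝ) < (L:ℝ) * (2:ℝ) ^ d := mul_pos hLpos hb1p
    have h1 : ENNReal.ofReal (((L:ℝ) * ((2:ℝ) ^ (-r) / 4)) ^ (1/r)) ≤
        lorentzNorm volume (momentAvg d (Stmt14.ff d L))
          ((d : ℝ) * (d + 1) / (2 * (d - 1))) r := by
      rw [lorentzNorm, ← ENNReal.ofReal_rpow_of_pos hlc]
      exact ENNReal.rpow_le_rpow (Stmt14.lorentz_integral_lower d L hd r hr)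
        (by positivity)
    have h2 : eLpNorm (Stmt14.ff d L) (ENNReal.ofReal (((d:ℝ)+1)/2)) volume ≤
        ENNReal.ofReal (((L:ℝ) * (2:ℝ) ^ d) ^ (1 / Stmt14.qq d)) := by
      have h := Stmt14.eLp_upper d L hd
      rw [ENNReal.ofReal_rpow_of_pos hlb] at h
      exact h
    have h3 : ENNReal.ofReal (((L:ℝ) * ((2:ℝ) ^ (-r) / 4)) ^ (1/r)) ≤
        ENNReal.ofReal (C * ((L:ℝ) * (2:ℝ) ^ d) ^ (1 / Stmt14.qq d)) :=
      calc ENNReal.ofReal (((L:ℝ) * ((2:ℝ) ^ (-r) / 4)) ^ (1/r)) ≤ _ := h1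
        _ ≤ _ := hb
        _ ≤ ENNReal.ofReal C *
            ENNReal.ofReal (((L:ℝ) * (2:ℝ) ^ d) ^ (1/Stmt14.qq d)) :=
          mul_le_mul_right h2 _
        _ = _ := by rw [← ENNReal.ofReal_mul (le_of_lt hC)]
    rw [ENNReal.ofReal_le_ofReal_iff (by positivity)] at h3
    exact h3
  have hεp : 0 < 1/r - 1/Stmt14.qq d := by
    have : 1/Stmt14.qq d < 1/r := one_div_lt_one_div_of_lt hr hq'
    linarith
  have htend : Filter.Tendsto (fun n : ℕ => (n:ℝ) ^ (1/r - 1/Stmt14.qq d))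
      Filter.atTop Filter.atTop :=
    (tendsto_rpow_atTop hεp).comp tendsto_natCast_atTop_atTop
  obtain ⟨L, hL1, hL2⟩ := ((htend.eventually_gt_atTop
    (C * ((2:ℝ) ^ d : ℝ) ^ (1/Stmt14.qq d) / ((2:ℝ) ^ (-r) / 4) ^ (1/r))).and
    (Filter.eventually_ge_atTop 1)).exists
  have hLpos : (0:ℝ) < L := by exact_mod_cast hL2
  have hm := master L hL2
  rw [Real.mul_rpow (le_of_lt hLpos) (le_of_lt hc1p),
    Real.mul_rpow (le_of_lt hLpos) (le_of_lt hb1p)] at hm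
  have hsplit : (L:ℝ) ^ (1/r) =
      (L:ℝ) ^ (1/Stmt14.qq d) * (L:ℝ) ^ (1/r - 1/Stmt14.qq d) := by
    rw [← Real.rpow_add hLpos]
    congr 1
    ring
  rw [hsplit] at hm
  have hLq : (0:ℝ) < (L:ℝ) ^ (1/Stmt14.qq d) := Real.rpow_pos_of_pos hLpos _
  have hfin : (L:ℝ) ^ (1/r - 1/Stmt14.qq d) ≤
      C * ((2:ℝ) ^ d : ℝ) ^ (1/Stmt14.qq d) / ((2:ℝ) ^ (-r) / 4) ^ (1/r) := by
    rw [le_div_iff₀ hc1r]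
    have h' : (L:ℝ) ^ (1/Stmt14.qq d) *
        ((L:ℝ) ^ (1/r - 1/Stmt14.qq d) * ((2:ℝ) ^ (-r) / 4) ^ (1/r)) ≤
        (L:ℝ) ^ (1/Stmt14.qq d) * (C * ((2:ℝ) ^ d : ℝ) ^ (1/Stmt14.qq d)) := by
      calc (L:ℝ) ^ (1/Stmt14.qq d) *
          ((L:ℝ) ^ (1/r - 1/Stmt14.qq d) * ((2:ℝ) ^ (-r) / 4) ^ (1/r))
          = (L:ℝ) ^ (1/Stmt14.qq d) * (L:ℝ) ^ (1/r - 1/Stmt14.qq d) *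
            ((2:ℝ) ^ (-r) / 4) ^ (1/r) := by ring
        _ ≤ C * ((L:ℝ) ^ (1/Stmt14.qq d) * ((2:ℝ) ^ d : ℝ) ^ (1/Stmt14.qq d)) := hm
        _ = (L:ℝ) ^ (1/Stmt14.qq d) * (C * ((2:ℝ) ^ d : ℝ) ^ (1/Stmt14.qq d)) := by
            ring
    exact le_of_mul_le_mul_left h' hLq
  linarith
end

section
/- Let ℙ = (P₁, P₂) be a polynomial curve, and let J be an interval on which P₁' and L_ℙ = det(ℙ', ℙ'') are both nonvanishing and single-signed. Then the map Φ(s,t) = ℙ(t) − ℙ(s) is injective on {(s,t) ∈ J² : s < t}. -/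
open Polynomial

private lemma cmvt17 (P₁ P₂ : Polynomial ℝ) {u v : ℝ} (huv : u < v) :
    ∃ c ∈ Set.Ioo u v,
      (P₂.eval v - P₂.eval u) * P₁.derivative.eval c
        = (P₁.eval v - P₁.eval u) * P₂.derivative.eval c :=
  exists_ratio_hasDerivAt_eq_ratio_slope (fun x => P₁.eval x)
    (fun x => P₁.derivative.eval x) huv P₁.continuousOn (fun x _ => P₁.hasDerivAt x)
    (fun x => P₂.eval x) (fun x => P₂.derivative.eval x)
    P₂.continuousOn (fun x _ => P₂.hasDerivAt x)

private lemma core17 (P₁ P₂ : Polynomial ℝ) (J : Set ℝ) (hJ : J.OrdConnected)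
    (hmono : StrictMonoOn (fun x => P₁.eval x) J ∨ StrictAntiOn (fun x => P₁.eval x) J)
    (hψ : Set.InjOn (fun w => P₂.derivative.eval w / P₁.derivative.eval w) J)
    (hP₁ne : ∀ w ∈ J, P₁.derivative.eval w ≠ 0)
    {s t s' t' : ℝ} (hs : s ∈ J) (ht : t ∈ J) (hs' : s' ∈ J) (ht' : t' ∈ J)
    (hst : s < t) (hst' : s' < t')
    (h1 : P₁.eval t - P₁.eval s = P₁.eval t' - P₁.eval s')
    (h2 : P₂.eval t - P₂.eval s = P₂.eval t' - P₂.eval s')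
    (hle : s ≤ s') : s = s' ∧ t = t' := by
  have einj : Set.InjOn (fun x => P₁.eval x) J :=
    hmono.elim StrictMonoOn.injOn StrictAntiOn.injOn
  -- helper : contradiction from two separated intervals with equal increments
  have absurd_pair : ∀ u ∈ J, ∀ v ∈ J, ∀ u' ∈ J, ∀ v' ∈ J, u < v → v ≤ u' → u' < v' →
      P₁.eval v - P₁.eval u = P₁.eval v' - P₁.eval u' →
      P₂.eval v - P₂.eval u = P₂.eval v' - P₂.eval u' → False := by
    intro u hu v hv u' hu' v' hv' huv hvu' hu'v' e1 e2
    obtain ⟨c₁, hc₁, hq₁⟩ := cmvt17 P₁ P₂ huv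
    obtain ⟨c₂, hc₂, hq₂⟩ := cmvt17 P₁ P₂ hu'v'
    have hc₁J : c₁ ∈ J := hJ.out hu hv ⟨hc₁.1.le, hc₁.2.le⟩
    have hc₂J : c₂ ∈ J := hJ.out hu' hv' ⟨hc₂.1.le, hc₂.2.le⟩
    have hAne : P₁.eval v - P₁.eval u ≠ 0 :=
      sub_ne_zero.mpr fun h => huv.ne' (einj hv hu h)
    rw [← e1, ← e2] at hq₂
    have h1' := hP₁ne c₁ hc₁J
    have h2' := hP₁ne c₂ hc₂J
    have e₁ : P₂.derivative.eval c₁ / P₁.derivative.eval c₁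
        = (P₂.eval v - P₂.eval u) / (P₁.eval v - P₁.eval u) := by
      rw [div_eq_div_iff h1' hAne]; linarith [hq₁]
    have e₂ : P₂.derivative.eval c₂ / P₁.derivative.eval c₂
        = (P₂.eval v - P₂.eval u) / (P₁.eval v - P₁.eval u) := by
      rw [div_eq_div_iff h2' hAne]; linarith [hq₂]
    have hceq : c₁ = c₂ := hψ hc₁J hc₂J (e₁.trans e₂.symm)
    have hclt : c₁ < c₂ := lt_of_lt_of_le hc₁.2 (le_trans hvu' hc₂.1.le)
    exact absurd hceq hclt.ne
  rcases eq_or_lt_of_le hle with heq | hlt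
  · subst heq
    have : P₁.eval t = P₁.eval t' := by linarith
    exact ⟨rfl, einj ht ht' this⟩
  · -- s < s' ; deduce t < t'
    have htt' : t < t' := by
      rcases hmono with hm | hm
      · have h1' : P₁.eval s < P₁.eval s' := hm hs hs' hlt
        have h2' : P₁.eval t < P₁.eval t' := by linarith
        by_contra hc
        exact absurd h2' (not_lt.mpr ((hm.le_iff_le ht' ht).mpr (not_lt.mp hc)))
      · have h1' : P₁.eval s' < P₁.eval s := hm hs hs' hlt
        have h2' : P₁.eval t' < P₁.eval t := by linarith
        by_contra hc
        exact absurd h2' (not_lt.mpr ((hm.le_iff_ge ht ht').mpr (not_lt.mp hc)))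
    exfalso
    rcases le_or_gt s' t with hcase | hcase
    · -- intervals [s, s'] and [t, t']
      exact absurd_pair s hs s' hs' t ht t' ht' hlt hcase htt'
        (by linarith) (by linarith)
    · -- intervals [s, t] and [s', t']
      exact absurd_pair s hs t ht s' hs' t' ht' hst hcase.le hst' h1 h2

/-- Injectivity of `Φ(s,t) = ℙ(t) − ℙ(s)` on `{(s,t) ∈ J² : s < t}` when `P₁'` and
`L_ℙ = P₁' P₂'' − P₂' P₁''` are nonvanishing and single-signed on the interval `J`. -/
theorem stmt_17 (P₁ P₂ : Polynomial ℝ) (J : Set ℝ) (hJ : J.OrdConnected)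
    (hP₁ : (∀ w ∈ J, 0 < P₁.derivative.eval w) ∨ (∀ w ∈ J, P₁.derivative.eval w < 0))
    (hL : (∀ w ∈ J,
        0 < (P₁.derivative * P₂.derivative.derivative -
          P₂.derivative * P₁.derivative.derivative).eval w) ∨
      (∀ w ∈ J,
        (P₁.derivative * P₂.derivative.derivative -
          P₂.derivative * P₁.derivative.derivative).eval w < 0)) :
    Set.InjOn
      (fun p : ℝ × ℝ => (P₁.eval p.2 - P₁.eval p.1, P₂.eval p.2 - P₂.eval p.1))
      {p : ℝ × ℝ | p.1 ∈ J ∧ p.2 ∈ J ∧ p.1 < p.2} := by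
  have hconv : Convex ℝ J := convex_iff_ordConnected.mpr hJ
  have hP₁ne : ∀ w ∈ J, P₁.derivative.eval w ≠ 0 := by
    rcases hP₁ with h | h
    · exact fun w hw => (h w hw).ne'
    · exact fun w hw => (h w hw).ne
  have hmono : StrictMonoOn (fun x => P₁.eval x) J ∨ StrictAntiOn (fun x => P₁.eval x) J := by
    rcases hP₁ with h | h
    · left
      apply StrictMonoOn.mono (strictMonoOn_of_deriv_pos hconv P₁.continuousOn ?_)
        le_rfl
      intro x hx
      rw [Polynomial.deriv]
      exact h x (interior_subset hx)
    · right
      apply StrictAntiOn.mono (strictAntiOn_of_deriv_neg hconv P₁.continuousOn ?_)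
        le_rfl
      intro x hx
      rw [Polynomial.deriv]
      exact h x (interior_subset hx)
  -- ψ = P₂'/P₁' is injective on J
  set ψ : ℝ → ℝ := fun w => P₂.derivative.eval w / P₁.derivative.eval w with hψdef
  have hψcont : ContinuousOn ψ J :=
    ContinuousOn.div P₂.derivative.continuousOn
      P₁.derivative.continuousOn hP₁ne
  have hψderiv : ∀ x ∈ J, HasDerivAt ψ
      ((P₁.derivative * P₂.derivative.derivative -
        P₂.derivative * P₁.derivative.derivative).eval x / (P₁.derivative.eval x) ^ 2) x := by
    intro x hx
    have h := (P₂.derivative.hasDerivAt x).div (P₁.derivative.hasDerivAt x) (hP₁ne x hx)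
    rw [Pi.div_def] at h
    refine h.congr_deriv ?_
    simp only [Polynomial.eval_sub, Polynomial.eval_mul]
    ring
  have hψinj : Set.InjOn ψ J := by
    rcases hL with h | h
    · refine (strictMonoOn_of_deriv_pos hconv hψcont ?_).injOn
      intro x hx
      rw [(hψderiv x (interior_subset hx)).deriv]
      have hne := hP₁ne x (interior_subset hx)
      exact div_pos (h x (interior_subset hx)) (by positivity)
    · refine (strictAntiOn_of_deriv_neg hconv hψcont ?_).injOn
      intro x hx
      rw [(hψderiv x (interior_subset hx)).deriv]
      apply div_neg_of_neg_of_pos (h x (interior_subset hx))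
      have := hP₁ne x (interior_subset hx)
      positivity
  intro p hp q hq heq
  obtain ⟨hp1, hp2, hp3⟩ := hp
  obtain ⟨hq1, hq2, hq3⟩ := hq
  have h1 : P₁.eval p.2 - P₁.eval p.1 = P₁.eval q.2 - P₁.eval q.1 :=
    congrArg Prod.fst heq
  have h2 : P₂.eval p.2 - P₂.eval p.1 = P₂.eval q.2 - P₂.eval q.1 :=
    congrArg Prod.snd heq
  rcases le_total p.1 q.1 with hle | hle
  · obtain ⟨ha, hb⟩ := core17 P₁ P₂ J hJ hmono hψinj hP₁ne hp1 hp2 hq1 hq2 hp3 hq3 h1 h2 hle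
    exact Prod.ext ha hb
  · obtain ⟨ha, hb⟩ := core17 P₁ P₂ J hJ hmono hψinj hP₁ne hq1 hq2 hp1 hp2 hq3 hp3 h1.symm h2.symm hle
    exact Prod.ext ha.symm hb.symm
end
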